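/- Let 0 < c < d and ℓ = (d - c)/d. The piecewise map F defined on the closed right half-plane by F(z) = (4z + iℓ(z - conj z)²)/(4 + 2iℓ(z - conj z)) on G₁ = {x + iy : 0 ≤ y ≤ 1, 0 ≤ x ≤ d(1 - ℓy)}, F(z) = z - (i(d - c)/2)(z - conj z) on G₂ = {x + iy : 0 ≤ y ≤ 1, x ≥ d(1 - ℓy)}, F(z) = ((2 - ℓ)z + ℓ·conj z)/(2(1 - ℓ)) on G₃ = {x + iy : y ≥ 1, 0 ≤ x ≤ c}, F(z) = z + (d - c) on G₄ = {x + iy : y ≥ 1, x ≥ c}, and F(z) = z on G₅ = {x + iy : y ≤ 0, x ≥ 0}, is a bijection of the closed right half-plane {z : Re z ≥ 0} onto itself. -/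

import Mathlib

open Complex ComplexConjugate

/-- The piecewise map `f₁` of the paper (formula (2.1)) on the closed right half-plane:
the trapezoid formula on `G₁`, the shear on `G₂`, the stretch on `G₃`, the translation
on `G₄` and the identity on `G₅`. -/
noncomputable def trapMap (ℓ c d : ℝ) (z : ℂ) : ℂ :=
  if z.im ≤ 0 then z
  else if z.im ≤ 1 then
    (if z.re ≤ d * (1 - ℓ * z.im) then
      (4 * z + I * (ℓ : ℂ) * (z - conj z) ^ 2) / (4 + 2 * I * (ℓ : ℂ) * (z - conj z))
     else z - (I * ((d : ℂ) - (c : ℂ)) / 2) * (z - conj z))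
  else
    (if z.re ≤ c then ((2 - (ℓ : ℂ)) * z + (ℓ : ℂ) * conj z) / (2 * (1 - (ℓ : ℂ)))
     else z + ((d : ℂ) - (c : ℂ)))

noncomputable def phiTM (ℓ c d x y : ℝ) : ℝ :=
  if y ≤ 0 then x
  else if y ≤ 1 then (if x ≤ d * (1 - ℓ * y) then x / (1 - ℓ * y) else x + (d - c) * y)
  else (if x ≤ c then x / (1 - ℓ) else x + (d - c))

noncomputable def psiTM (ℓ c d u v : ℝ) : ℝ :=
  if v ≤ 0 then u
  else if v ≤ 1 then (if u ≤ d then u * (1 - ℓ * v) else u - (d - c) * v)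
  else (if u ≤ d then u * (1 - ℓ) else u - (d - c))

lemma trapMap_eq (ℓ c d : ℝ) (hc : 0 < c) (hcd : c < d) (hℓ : ℓ = (d - c) / d) (z : ℂ) :
    trapMap ℓ c d z = ⟨phiTM ℓ c d z.re z.im, z.im⟩ := by
  have hd : (0:ℝ) < d := hc.trans hcd
  have hℓ1 : ℓ < 1 := by rw [hℓ]; rw [div_lt_one hd]; linarith
  have hℓ0 : 0 < ℓ := by rw [hℓ]; exact div_pos (by linarith) hd
  unfold trapMap phiTM
  split_ifs with h1 h2 h3 h4
  · exact Complex.ext rfl rfl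
  · -- G1 branch
    have hy1 : z.im ≤ 1 := h2
    have hden : (0:ℝ) < 1 - ℓ * z.im := by nlinarith [not_le.mp h1]
    rw [Complex.sub_conj]
    have hden' : (4 + 2 * I * (ℓ:ℂ) * ((2 * z.im : ℝ) * I)) = ((4 * (1 - ℓ * z.im) : ℝ) : ℂ) := by
      push_cast
      ring_nf
      rw [I_sq]
      ring
    rw [hden']
    have hnum : (4 * z + I * (ℓ:ℂ) * ((2 * z.im : ℝ) * I) ^ 2)
        = 4 * z - ((4 * ℓ * z.im ^ 2 : ℝ) : ℂ) * I := by
      push_cast; ring_nf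
      rw [show (I:ℂ) ^ 3 = -I from by rw [pow_succ, I_sq]; ring]
      ring
    rw [hnum, Complex.ext_iff]
    constructor
    · rw [Complex.div_ofReal_re]
      simp [Complex.mul_re, Complex.mul_im, ← Complex.ofReal_pow]
      field_simp
    · rw [Complex.div_ofReal_im]
      simp [Complex.mul_re, Complex.mul_im, ← Complex.ofReal_pow]
      have hne : (1 - z.im * ℓ) ≠ 0 := by nlinarith
      field_simp
  · -- G2 branch
    rw [Complex.sub_conj, Complex.ext_iff]
    constructor <;> simp [Complex.mul_re, Complex.mul_im, ← Complex.ofReal_pow] <;> ring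
  · -- G3 branch
    have hden : (0:ℝ) < 1 - ℓ := by linarith
    have hden' : ((2 : ℂ) * (1 - (ℓ:ℂ))) = ((2 * (1 - ℓ) : ℝ) : ℂ) := by push_cast; ring
    rw [hden', Complex.ext_iff]
    constructor
    · rw [Complex.div_ofReal_re]
      simp [Complex.mul_re, Complex.mul_im, I_sq]
      field_simp
      ring
    · rw [Complex.div_ofReal_im]
      simp [Complex.mul_re, Complex.mul_im, I_sq]
      field_simp
      ring
  · rw [Complex.ext_iff]; constructor <;> simp

section Real
variable {ℓ c d : ℝ}

lemma hd' (hc : 0 < c) (hcd : c < d) : (0:ℝ) < d := hc.trans hcd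
lemma hℓ1' (hc : 0 < c) (hcd : c < d) (hℓ : ℓ = (d - c) / d) : ℓ < 1 := by
  rw [hℓ, div_lt_one (hd' hc hcd)]; linarith
lemma hℓ0' (hc : 0 < c) (hcd : c < d) (hℓ : ℓ = (d - c) / d) : 0 < ℓ := by
  rw [hℓ]; exact div_pos (by linarith) (hd' hc hcd)
lemma hℓd (hc : 0 < c) (hcd : c < d) (hℓ : ℓ = (d - c) / d) : ℓ * d = d - c := by
  rw [hℓ, div_mul_cancel₀]
  exact (hd' hc hcd).ne'

variable (hc : 0 < c) (hcd : c < d) (hℓ : ℓ = (d - c) / d)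
include hc hcd hℓ

lemma phi_nonneg {x y : ℝ} (hx : 0 ≤ x) : 0 ≤ phiTM ℓ c d x y := by
  have h1 := hℓ1' hc hcd hℓ
  have h0 := hℓ0' hc hcd hℓ
  unfold phiTM
  split_ifs with h2 h3 h4 h5
  · exact hx
  · have : 0 < 1 - ℓ * y := by nlinarith [not_le.mp h2]
    positivity
  · nlinarith [not_le.mp h2]
  · have : 0 < 1 - ℓ := by linarith
    positivity
  · nlinarith [not_le.mp h3]

lemma psi_nonneg {u v : ℝ} (hu : 0 ≤ u) : 0 ≤ psiTM ℓ c d u v := by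
  have h1 := hℓ1' hc hcd hℓ
  have h0 := hℓ0' hc hcd hℓ
  unfold psiTM
  split_ifs with h2 h3 h4 h5
  · exact hu
  · have : 0 < 1 - ℓ * v := by nlinarith [not_le.mp h2]
    positivity
  · nlinarith [not_le.mp h4, not_le.mp h2]
  · exact mul_nonneg hu (by linarith)
  · nlinarith [not_le.mp h5]

lemma psi_phi {x y : ℝ} (hx : 0 ≤ x) : psiTM ℓ c d (phiTM ℓ c d x y) y = x := by
  have h1 := hℓ1' hc hcd hℓ
  have h0 := hℓ0' hc hcd hℓ
  have hld := hℓd hc hcd hℓ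
  have hd0 := hd' hc hcd
  rcases le_or_gt y 0 with h2 | h2
  · simp [phiTM, psiTM, h2]
  · rcases le_or_gt y 1 with h3 | h3
    · have hden : 0 < 1 - ℓ * y := by nlinarith
      by_cases h4 : x ≤ d * (1 - ℓ * y)
      · rw [show phiTM ℓ c d x y = x / (1 - ℓ * y) by simp [phiTM, h2.not_ge, h3, h4]]
        have hle : x / (1 - ℓ * y) ≤ d := (div_le_iff₀ hden).mpr (by linarith)
        rw [show psiTM ℓ c d (x / (1 - ℓ * y)) y = x / (1 - ℓ * y) * (1 - ℓ * y) by
          simp [psiTM, h2.not_ge, h3, hle]]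
        field_simp
      · rw [show phiTM ℓ c d x y = x + (d - c) * y by simp [phiTM, h2.not_ge, h3, h4]]
        rw [show psiTM ℓ c d (x + (d - c) * y) y = x + (d - c) * y - (d - c) * y by
          simp only [psiTM, if_neg h2.not_ge, if_pos h3,
            if_neg (by push_neg; nlinarith [not_le.mp h4] : ¬ x + (d - c) * y ≤ d)]]
        ring
    · have hden : 0 < 1 - ℓ := by linarith
      by_cases h4 : x ≤ c
      · rw [show phiTM ℓ c d x y = x / (1 - ℓ) by simp [phiTM, h2.not_ge, h3.not_ge, h4]]
        have hle : x / (1 - ℓ) ≤ d := (div_le_iff₀ hden).mpr (by nlinarith)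
        rw [show psiTM ℓ c d (x / (1 - ℓ)) y = x / (1 - ℓ) * (1 - ℓ) by
          simp [psiTM, h2.not_ge, h3.not_ge, hle]]
        field_simp
      · rw [show phiTM ℓ c d x y = x + (d - c) by simp [phiTM, h2.not_ge, h3.not_ge, h4]]
        rw [show psiTM ℓ c d (x + (d - c)) y = x + (d - c) - (d - c) by
          simp only [psiTM, if_neg h2.not_ge, if_neg h3.not_ge,
            if_neg (by push_neg; nlinarith [not_le.mp h4] : ¬ x + (d - c) ≤ d)]]
        ring

lemma phi_psi {u v : ℝ} (hu : 0 ≤ u) : phiTM ℓ c d (psiTM ℓ c d u v) v = u := by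
  have h1 := hℓ1' hc hcd hℓ
  have h0 := hℓ0' hc hcd hℓ
  have hld := hℓd hc hcd hℓ
  have hd0 := hd' hc hcd
  rcases le_or_gt v 0 with h2 | h2
  · simp [phiTM, psiTM, h2]
  · rcases le_or_gt v 1 with h3 | h3
    · have hden : 0 < 1 - ℓ * v := by nlinarith
      by_cases h4 : u ≤ d
      · rw [show psiTM ℓ c d u v = u * (1 - ℓ * v) by simp [psiTM, h2.not_ge, h3, h4]]
        rw [show phiTM ℓ c d (u * (1 - ℓ * v)) v = u * (1 - ℓ * v) / (1 - ℓ * v) by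
          simp [phiTM, h2.not_ge, h3, (by nlinarith : u * (1 - ℓ * v) ≤ d * (1 - ℓ * v))]]
        field_simp
      · rw [show psiTM ℓ c d u v = u - (d - c) * v by simp [psiTM, h2.not_ge, h3, h4]]
        rw [show phiTM ℓ c d (u - (d - c) * v) v = u - (d - c) * v + (d - c) * v by
          simp only [phiTM, if_neg h2.not_ge, if_pos h3,
            if_neg (by push_neg; nlinarith [not_le.mp h4] :
              ¬ u - (d - c) * v ≤ d * (1 - ℓ * v))]]
        ring
    · have hden : 0 < 1 - ℓ := by linarith
      by_cases h4 : u ≤ d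
      · rw [show psiTM ℓ c d u v = u * (1 - ℓ) by simp [psiTM, h2.not_ge, h3.not_ge, h4]]
        rw [show phiTM ℓ c d (u * (1 - ℓ)) v = u * (1 - ℓ) / (1 - ℓ) by
          simp [phiTM, h2.not_ge, h3.not_ge, (by nlinarith : u * (1 - ℓ) ≤ c)]]
        field_simp
      · rw [show psiTM ℓ c d u v = u - (d - c) by simp [psiTM, h2.not_ge, h3.not_ge, h4]]
        rw [show phiTM ℓ c d (u - (d - c)) v = u - (d - c) + (d - c) by
          simp only [phiTM, if_neg h2.not_ge, if_neg h3.not_ge,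
            if_neg (by push_neg; nlinarith [not_le.mp h4] : ¬ u - (d - c) ≤ c)]]
        ring

end Real

/-- The piecewise map `f₁` is a bijection of the closed right half-plane onto itself. -/
theorem stmt_6 (c d : ℝ) (hc : 0 < c) (hcd : c < d) (ℓ : ℝ) (hℓ : ℓ = (d - c) / d) :
    Set.BijOn (trapMap ℓ c d) {z : ℂ | 0 ≤ z.re} {z : ℂ | 0 ≤ z.re} := by
  set G : ℂ → ℂ := fun w => ⟨psiTM ℓ c d w.re w.im, w.im⟩ with hG
  have hmapF : Set.MapsTo (trapMap ℓ c d) {z : ℂ | 0 ≤ z.re} {z : ℂ | 0 ≤ z.re} := by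
    intro z hz
    rw [Set.mem_setOf_eq, trapMap_eq ℓ c d hc hcd hℓ]
    exact phi_nonneg hc hcd hℓ hz
  have hmapG : Set.MapsTo G {z : ℂ | 0 ≤ z.re} {z : ℂ | 0 ≤ z.re} := by
    intro w hw
    exact psi_nonneg hc hcd hℓ hw
  have hinv : Set.InvOn G (trapMap ℓ c d) {z : ℂ | 0 ≤ z.re} {z : ℂ | 0 ≤ z.re} := by
    constructor
    · intro z hz
      rw [hG]
      simp only [trapMap_eq ℓ c d hc hcd hℓ]
      exact Complex.ext (psi_phi hc hcd hℓ hz) rfl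
    · intro w hw
      rw [trapMap_eq ℓ c d hc hcd hℓ]
      exact Complex.ext (phi_psi hc hcd hℓ hw) rfl
  exact hinv.bijOn hmapF hmapG
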